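/- For every n ≥ 1, every permutation σ of {1,…,n+1} and every i ∈ {1,…,n+1}, the signature of the deleted permutation δᵢ^σ satisfies ε_{δᵢ^σ} = (−1)^{σ⁻¹(i) − i} · ε_σ, where ε denotes the sign of a permutation. -/

import Mathlib

/-- For `n ≥ 1`, a permutation `σ` of `{0,…,n}` (written 0-based instead of the paper's
1-based `{1,…,n+1}`), `i ∈ {0,…,n}`, and the deleted permutation `δ = δᵢ^σ` of `Fin n`
(characterized by its values: `δ j = σ j'` if `σ j' < i` and `σ j' − 1` if `σ j' > i`,
where `j' = j` if `j < σ⁻¹(i)` and `j' = j + 1` otherwise), the signature satisfies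
`ε_δ = (−1)^(σ⁻¹(i) − i) · ε_σ`. -/
theorem stmt_3 (n : ℕ) (hn : 1 ≤ n) (σ : Equiv.Perm (Fin (n + 1))) (i : Fin (n + 1))
    (δ : Equiv.Perm (Fin n))
    (hδ : ∀ j : Fin n,
      (δ j : ℕ) =
        (let j' : Fin (n + 1) := if (j : ℕ) < ((σ⁻¹ i : Fin (n + 1)) : ℕ)
          then j.castSucc else j.succ
        if (σ j' : ℕ) < (i : ℕ) then (σ j' : ℕ) else (σ j' : ℕ) - 1)) :
    Equiv.Perm.sign δ =
      (-1 : ℤˣ) ^ ((((σ⁻¹ i : Fin (n + 1)) : ℕ) : ℤ) - (((i : Fin (n + 1)) : ℕ) : ℤ)) *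
        Equiv.Perm.sign σ := by
  set k : Fin (n + 1) := σ⁻¹ i with hk
  set σ' : Equiv.Perm (Fin (n + 1)) := i.cycleRange * σ * (k.cycleRange)⁻¹ with hσ'
  -- the `if` in `hδ` is `succAbove`
  have hsa : ∀ j : Fin n,
      (if (j : ℕ) < (k : ℕ) then j.castSucc else j.succ) = k.succAbove j := by
    intro j
    simp [Fin.succAbove, Fin.lt_def]
  have hσ'eq : σ' = Equiv.Perm.decomposeFin.symm (0, δ) := by
    ext x
    refine Fin.cases ?_ (fun j => ?_) x
    · have h1 : (k.cycleRange)⁻¹ 0 = k := Fin.cycleRange_symm_zero k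
      simp only [hσ', Equiv.Perm.mul_apply, h1, hk, Fin.cycleRange_symm_zero, (by exact σ.apply_symm_apply i : σ (σ⁻¹ i) = i),
        Fin.cycleRange_self, Equiv.Perm.decomposeFin_symm_apply_zero]
      erw [Fin.cycleRange_symm_zero, (by exact σ.apply_symm_apply i : σ (σ⁻¹ i) = i), Fin.cycleRange_self]
    · have h1 : (k.cycleRange)⁻¹ j.succ = k.succAbove j := Fin.cycleRange_symm_succ k j
      have hne : σ (k.succAbove j) ≠ i := by
        intro h
        have : k.succAbove j = k :=
          σ.injective (by rw [h, hk, (by exact σ.apply_symm_apply i : σ (σ⁻¹ i) = i)])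
        exact Fin.succAbove_ne k j this
      have hδj := hδ j
      rw [hsa j] at hδj
      simp only [hσ', Equiv.Perm.mul_apply, h1, Equiv.Perm.decomposeFin_symm_apply_succ,
        Equiv.swap_self, Equiv.refl_apply]
      set v : Fin (n + 1) := σ (k.succAbove j) with hv
      rcases lt_or_gt_of_ne (fun h => hne (Fin.ext (by exact_mod_cast h)) :
          (v : ℕ) ≠ (i : ℕ)) with hlt | hgt
    -- v < i
      · rw [if_pos hlt] at hδj
        have h3 : ((i.cycleRange v : Fin (n + 1)) : ℕ) = (v : ℕ) + 1 :=
          Fin.coe_cycleRange_of_lt (Fin.lt_def.mpr hlt)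
        simp only [Fin.val_succ]
        omega
      · rw [if_neg (by omega)] at hδj
        have h2 : i.cycleRange v = v := Fin.cycleRange_of_gt (Fin.lt_def.mpr hgt)
        have h3 : ((i.cycleRange v : Fin (n + 1)) : ℕ) = (v : ℕ) := congrArg Fin.val h2
        simp only [Fin.val_succ]
        omega
  have hsign : Equiv.Perm.sign σ' = Equiv.Perm.sign δ := by
    rw [hσ'eq, Equiv.Perm.decomposeFin.symm_sign]
    simp
  have hsign2 : Equiv.Perm.sign σ' =
      (-1 : ℤˣ) ^ (i : ℕ) * Equiv.Perm.sign σ * (-1 : ℤˣ) ^ (k : ℕ) := by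
    rw [hσ']
    simp [Fin.sign_cycleRange]
  have hself : ∀ m : ℕ, ((-1 : ℤˣ) ^ m)⁻¹ = (-1 : ℤˣ) ^ m := by
    intro m
    refine inv_eq_of_mul_eq_one_right ?_
    rw [← pow_add]
    simp [pow_add, ← two_mul, pow_mul]
  have hz : (-1 : ℤˣ) ^ (((k : ℕ) : ℤ) - ((i : ℕ) : ℤ)) =
      (-1 : ℤˣ) ^ (k : ℕ) * (-1 : ℤˣ) ^ (i : ℕ) := by
    rw [zpow_sub, zpow_natCast, zpow_natCast, hself]
  rw [← hsign, hsign2, hz, mul_comm, ← mul_assoc]
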